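/- The map 𝔭 sending a (k+1)-core γ to the sequence (λ₁, …, λ_ℓ), where λ_i is the number of cells in row i of γ with hook-length at most k, is a bijection from the set of (k+1)-cores to the set of k-bounded partitions (partitions with all parts ≤ k). -/

import Mathlib

open scoped Classical

namespace KSchur

noncomputable section

/-! Partitions as weakly decreasing, eventually-zero functions `ℕ → ℕ`
(rows indexed from 0; row 0 is the bottom row, as in the paper). -/

def IsPartitionFun (f : ℕ → ℕ) : Prop :=
  (∀ ⦃i j : ℕ⦄, i ≤ j → f j ≤ f i) ∧ ∃ N, f N = 0

def IsKBounded (k : ℕ) (f : ℕ → ℕ) : Prop := ∀ i, f i ≤ k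

/-- the number of cells of a partition -/
def sizeP (f : ℕ → ℕ) : ℕ := Nat.card {p : ℕ × ℕ | p.2 < f p.1}

/-- column lengths (the conjugate partition) -/
def colLen (f : ℕ → ℕ) (j : ℕ) : ℕ := Nat.card {i : ℕ | j < f i}

/-- hook length of the (0-indexed) cell `(i,j)` -/
def hookLen (f : ℕ → ℕ) (i j : ℕ) : ℕ := (f i - j) + (colLen f j - i) - 1

/-- an `n`-core: no cell has hook length `n` -/
def IsCore (n : ℕ) (f : ℕ → ℕ) : Prop := ∀ i j, j < f i → hookLen f i j ≠ n

/-- the `(k+1)`-residue of the cell `(i,j)` -/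
def resid (k : ℕ) (i j : ℕ) : ZMod (k + 1) := (j : ZMod (k + 1)) - (i : ZMod (k + 1))

def Extremal (f : ℕ → ℕ) (i j : ℕ) : Prop := j < f i ∧ ¬ (j + 1 < f (i + 1))

def Removable (f : ℕ → ℕ) (i j : ℕ) : Prop := j < f i ∧ f i = j + 1 ∧ f (i + 1) ≤ j

def Addable (f : ℕ → ℕ) (i j : ℕ) : Prop := j = f i ∧ (i = 0 ∨ f i < f (i - 1))

/-- the number of `k`-bounded cells (hook length at most `k`) in row `i` -/
def rowCount (k : ℕ) (f : ℕ → ℕ) (i : ℕ) : ℕ :=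
  Nat.card {j : ℕ | j < f i ∧ hookLen f i j ≤ k}

/-- the map `𝔭` from `(k+1)`-cores to `k`-bounded partitions -/
def pmapFun (k : ℕ) (f : ℕ → ℕ) : ℕ → ℕ := rowCount k f

/-- the total number of `k`-bounded cells -/
def kBoundedCount (k : ℕ) (f : ℕ → ℕ) : ℕ :=
  Nat.card {p : ℕ × ℕ | p.2 < f p.1 ∧ hookLen f p.1 p.2 ≤ k}

/-- the map `𝔠`, inverse of `𝔭` -/
def cmap (k : ℕ) (lam : ℕ → ℕ) : ℕ → ℕ :=
  if h : ∃ g, IsPartitionFun g ∧ IsCore (k + 1) g ∧ pmapFun k g = lam then h.choose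
  else fun _ => 0

/-! The action of the affine symmetric group generators `σ_i` on `(k+1)`-cores:
remove all removable corners of residue `i` if there is one, otherwise add all
addable corners of residue `i` if there is one. -/

def RemRowRes (k : ℕ) (f : ℕ → ℕ) (a : ℕ) (i : ZMod (k + 1)) : Prop :=
  0 < f a ∧ f (a + 1) < f a ∧ resid k a (f a - 1) = i

def AddRowRes (k : ℕ) (f : ℕ → ℕ) (a : ℕ) (i : ZMod (k + 1)) : Prop :=
  (a = 0 ∨ f a < f (a - 1)) ∧ resid k a (f a) = i

def coreAct (k : ℕ) (i : ZMod (k + 1)) (f : ℕ → ℕ) : ℕ → ℕ :=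
  if ∃ a, RemRowRes k f a i then fun a => if RemRowRes k f a i then f a - 1 else f a
  else if ∃ a, AddRowRes k f a i then fun a => if AddRowRes k f a i then f a + 1 else f a
  else f

/-- action of a word in the generators (rightmost letter acts first) -/
def wordActZM (k : ℕ) (L : List (ZMod (k + 1))) (f : ℕ → ℕ) : ℕ → ℕ :=
  L.foldr (fun i g => coreAct k i g) f

def wordActZ (k : ℕ) (L : List ℤ) (f : ℕ → ℕ) : ℕ → ℕ :=
  wordActZM k (L.map fun t => ((t : ℤ) : ZMod (k + 1))) f

/-- the word `σ_r σ_{r+1} ⋯ σ_{s-2} σ_{s-1} σ_{s-2} ⋯ σ_{r+1} σ_r` (as a list of integers,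
read left to right) -/
def trsList (r s : ℤ) : List ℤ :=
  ((List.range (s - r).toNat).map fun t => r + t) ++
    (((List.range ((s - r).toNat - 1)).map fun t => r + t).reverse)

/-- action of the transposition `t_{r,s}` on `(k+1)`-cores -/
def trsAct (k : ℕ) (r s : ℤ) (f : ℕ → ℕ) : ℕ → ℕ := wordActZ k (trsList r s) f

/-! `σ_A` for a subset `A ⊆ ℤ_{k+1}`: the product, over the maximal cyclic components
`[a,b]` of `A`, of `σ_b σ_{b-1} ⋯ σ_a`. -/

/-- the length of the maximal cyclic run of `A` starting at `a` -/
def runLen (k : ℕ) (A : Finset (ZMod (k + 1))) (a : ZMod (k + 1)) : ℕ :=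
  if h : ∃ m : ℕ, a + ((m + 1 : ℕ) : ZMod (k + 1)) ∉ A then Nat.find h + 1 else 0

/-- the word `σ_{a+m-1} ⋯ σ_{a+1} σ_a` for the cyclic component of `A` starting at `a` -/
def compWord (k : ℕ) (A : Finset (ZMod (k + 1))) (a : ZMod (k + 1)) : List (ZMod (k + 1)) :=
  ((List.range (runLen k A a)).map fun t => a + (t : ℕ)).reverse

/-- the action of `σ_A` on `(k+1)`-cores (the cyclic components commute; we compose
them in increasing order of the representative of their starting residue) -/
def sigmaSet (k : ℕ) (A : Finset (ZMod (k + 1))) (f : ℕ → ℕ) : ℕ → ℕ :=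
  wordActZM k
    (((((A.filter fun a => a - 1 ∉ A).image fun a => ZMod.val a).sort (· ≤ ·)).map
        fun av => compWord k A ((av : ℕ) : ZMod (k + 1))).flatten) f

/-! Vertical `(k,ℓ)`-strips. -/

/-- `f/g` is a (disjoint) union of horizontal ribbons: no two cells of the skew diagram
are vertically adjacent -/
def HorizRibbons (f g : ℕ → ℕ) : Prop :=
  (∀ a, g a ≤ f a) ∧
    ∀ a b, (g a ≤ b ∧ b < f a) → ¬(g (a + 1) ≤ b ∧ b < f (a + 1))

/-- `g ⋖ f` with `f/g` a union of horizontal ribbons whose lowest component is in row `rr` -/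
def CoverHoriz (k : ℕ) (f g : ℕ → ℕ) (rr : ℕ) : Prop :=
  IsPartitionFun g ∧ IsCore (k + 1) g ∧
    kBoundedCount k f = kBoundedCount k g + 1 ∧ HorizRibbons f g ∧
    g rr < f rr ∧ ∀ a < rr, f a = g a

/-- the number of rows of the main subpartition of `ghat` (relative to `g`) -/
def mainLen (k : ℕ) (g ghat : ℕ → ℕ) : ℕ :=
  Nat.card {a : ℕ | g 0 - rowCount k g 0 < ghat a}

def VertStripChain (k l : ℕ) (g ghat δ : ℕ → ℕ) (w : ℕ → ℕ → ℕ) (r : ℕ → ℕ) : Prop :=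
  w 0 = ghat ∧ w l = δ ∧ (∀ i < l, CoverHoriz k (w i) (w (i + 1)) (r i)) ∧
    (∀ i < l, r i < mainLen k g ghat) ∧
    ∀ i j, i < l → j < l → r i = r j → i = j

/-- `δ` is obtained from `ghat` by removing a vertical `(k,ℓ)`-strip
(`ghat` being the truncated core of the core `g`) -/
def RemVertStrip (k l : ℕ) (g ghat δ : ℕ → ℕ) : Prop :=
  ∃ w r, VertStripChain k l g ghat δ w r

/-- `γ̂` : the core of `𝔭(γ)` with its first part removed -/
def hatCore (k : ℕ) (g : ℕ → ℕ) : ℕ → ℕ := cmap k fun i => rowCount k g (i + 1)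

/-! OX diagrams, the sets `𝒟` and `𝒞`, changeable cells. -/

def DSet (k : ℕ) (lam : ℕ → ℕ) : Set ((ℕ → ℕ) × Finset (ZMod (k + 1))) :=
  {p | ∃ l ≤ k - lam 0,
      RemVertStrip k l (cmap k lam) (hatCore k (cmap k lam)) p.1 ∧
      p.2.card = lam 0 + l ∧ kBoundedCount k (sigmaSet k p.2 p.1) = sizeP lam}

/-- a changeable cell of `(δ, A)`: a cell of `σ_A(δ)` at the top of its column and
belonging to `γ̂` -/
def IsChangeable (k : ℕ) (lam δ : ℕ → ℕ) (A : Finset (ZMod (k + 1))) (c : ℕ × ℕ) : Prop :=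
  c.2 < sigmaSet k A δ c.1 ∧ sigmaSet k A δ (c.1 + 1) ≤ c.2 ∧
    c.2 < hatCore k (cmap k lam) c.1

def CSet (k : ℕ) (lam : ℕ → ℕ) : Set ((ℕ → ℕ) × Finset (ZMod (k + 1))) :=
  {p | p ∈ DSet k lam ∧ ∃ c, IsChangeable k lam p.1 p.2 c}

/-- an O cell of the OX diagram of `(δ, A)`: a cell of `γ̂/δ` -/
def IsOCell (k : ℕ) (lam δ : ℕ → ℕ) (c : ℕ × ℕ) : Prop :=
  δ c.1 ≤ c.2 ∧ c.2 < hatCore k (cmap k lam) c.1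

/-- an OX cell: a cell of `γ̂/δ` that is also a cell of `σ_A(δ)/δ` -/
def IsOXCell (k : ℕ) (lam δ : ℕ → ℕ) (A : Finset (ZMod (k + 1))) (c : ℕ × ℕ) : Prop :=
  δ c.1 ≤ c.2 ∧ c.2 < hatCore k (cmap k lam) c.1 ∧ c.2 < sigmaSet k A δ c.1

/-- the rightmost changeable cell of `(δ, A)` -/
def rcc (k : ℕ) (lam δ : ℕ → ℕ) (A : Finset (ZMod (k + 1))) : ℕ × ℕ :=
  if h : ∃ c, IsChangeable k lam δ A c ∧ ∀ c', IsChangeable k lam δ A c' → c'.2 ≤ c.2 then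
    h.choose
  else (0, 0)

/-- the column of the leftmost OX cell in row `a` -/
def loxCol (k : ℕ) (lam δ : ℕ → ℕ) (A : Finset (ZMod (k + 1))) (a : ℕ) : ℕ :=
  if h : ∃ b, IsOXCell k lam δ A (a, b) then Nat.find h else 0

/-- the column of the leftmost changeable cell `b'` in row `a` all of whose residues
between that of `(a,b')` (inclusive) and that of `(a,b)` (exclusive) lie in `A` -/
def caseIICol (k : ℕ) (lam δ : ℕ → ℕ) (A : Finset (ZMod (k + 1))) (a b : ℕ) : ℕ :=
  if h : ∃ b', IsChangeable k lam δ A (a, b') ∧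
      ∀ t : ℤ, (b' : ℤ) - (a : ℤ) ≤ t → t < (b : ℤ) - (a : ℤ) →
        ((t : ℤ) : ZMod (k + 1)) ∈ A then
    Nat.find h
  else b

/-- the involution `φ` of the paper -/
def phiInv (k : ℕ) (lam : ℕ → ℕ) (p : (ℕ → ℕ) × Finset (ZMod (k + 1))) :
    (ℕ → ℕ) × Finset (ZMod (k + 1)) :=
  let δ := p.1
  let A := p.2
  let c := rcc k lam δ A
  if IsOXCell k lam δ A c then
    (trsAct k ((loxCol k lam δ A c.1 : ℤ) - (c.1 : ℤ)) ((c.2 : ℤ) - (c.1 : ℤ) + 1) δ,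
      A.erase (resid k c.1 c.2))
  else
    (trsAct k ((caseIICol k lam δ A c.1 c.2 : ℤ) - (c.1 : ℤ)) ((c.2 : ℤ) - (c.1 : ℤ) + 1) δ,
      insert (resid k c.1 c.2) A)

/-! Skew diagrams, connectivity, ribbons. -/

def skewSet (g δ : ℕ → ℕ) : Set (ℕ × ℕ) := {p | δ p.1 ≤ p.2 ∧ p.2 < g p.1}

def adjCell (p q : ℕ × ℕ) : Prop :=
  (p.1 = q.1 ∧ (p.2 + 1 = q.2 ∨ q.2 + 1 = p.2)) ∨
    (p.2 = q.2 ∧ (p.1 + 1 = q.1 ∨ q.1 + 1 = p.1))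

def connIn (S : Set (ℕ × ℕ)) (p q : ℕ × ℕ) : Prop :=
  Relation.ReflTransGen (fun x y => adjCell x y ∧ x ∈ S ∧ y ∈ S) p q

/-- the connected component of `p` in `S` -/
def compOf (S : Set (ℕ × ℕ)) (p : ℕ × ℕ) : Set (ℕ × ℕ) := {q | q ∈ S ∧ connIn S p q}

/-- the head (southeast-most cell, i.e. the cell of maximal content) of the
component of `q` -/
def IsHead (S : Set (ℕ × ℕ)) (q : ℕ × ℕ) : Prop :=
  q ∈ S ∧ ∀ p ∈ S, connIn S q p → (p.2 : ℤ) - (p.1 : ℤ) ≤ (q.2 : ℤ) - (q.1 : ℤ)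

/-! A model of the ring of symmetric functions: coefficient functions in the Schur
basis.  `schurB lam` is the Schur function `s_lam`. -/

abbrev SymF := (ℕ → ℕ) → ℤ

def schurB (lam : ℕ → ℕ) : SymF := fun μ => if μ = lam then 1 else 0

/-- the Hall inner product (Schur functions are orthonormal) -/
def hallIP (f g : SymF) : ℤ := ∑ᶠ lam, f lam * g lam

/-- `lam/μ` is a vertical `m`-strip -/
def IsVStrip (μ lam : ℕ → ℕ) (m : ℕ) : Prop :=
  (∀ i, μ i ≤ lam i) ∧ (∀ i, lam i - μ i ≤ 1) ∧ sizeP lam = sizeP μ + m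

/-- `lam/μ` is a horizontal `m`-strip -/
def IsHStrip (μ lam : ℕ → ℕ) (m : ℕ) : Prop :=
  (∀ i, μ i ≤ lam i) ∧ (∀ i, lam (i + 1) ≤ μ i) ∧ sizeP lam = sizeP μ + m

/-- multiplication by the elementary symmetric function `e_m` (Pieri rule) -/
def mulE (m : ℕ) (f : SymF) : SymF := fun μ =>
  if IsPartitionFun μ then ∑ᶠ lam ∈ {lam | IsPartitionFun lam ∧ IsVStrip lam μ m}, f lam
  else 0

/-- multiplication by the complete homogeneous symmetric function `h_m` (Pieri rule) -/
def mulH (m : ℕ) (f : SymF) : SymF := fun μ =>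
  if IsPartitionFun μ then ∑ᶠ lam ∈ {lam | IsPartitionFun lam ∧ IsHStrip lam μ m}, f lam
  else 0

/-- the operator `e_m^⊥` -/
def eperp (m : ℕ) (f : SymF) : SymF := fun μ =>
  if IsPartitionFun μ then ∑ᶠ lam ∈ {lam | IsPartitionFun lam ∧ IsVStrip μ lam m}, f lam
  else 0

/-- the Bernstein operator `B_n = Σ_{i ≥ 0} (-1)^i h_{n+i} e_i^⊥` -/
def Bop (n : ℕ) (f : SymF) : SymF := fun μ =>
  ∑ᶠ i : ℕ, (-1 : ℤ) ^ i * mulH (n + i) (eperp i f) μ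

/-! The affine symmetric group by its Coxeter presentation. -/

def coxRels (k : ℕ) : Set (FreeGroup (ZMod (k + 1))) :=
  {w | (∃ i : ZMod (k + 1), w = FreeGroup.of i * FreeGroup.of i) ∨
    (∃ i : ZMod (k + 1),
      w = FreeGroup.of i * FreeGroup.of (i + 1) * FreeGroup.of i *
        (FreeGroup.of (i + 1) * FreeGroup.of i * FreeGroup.of (i + 1))⁻¹) ∨
    ∃ i j : ZMod (k + 1), i - j ≠ 1 ∧ j - i ≠ 1 ∧
      w = FreeGroup.of i * FreeGroup.of j * (FreeGroup.of j * FreeGroup.of i)⁻¹}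

/-- the generator `σ_t` (for an integer `t`, read modulo `k+1`) -/
def sigmaGen (k : ℕ) (t : ℤ) : PresentedGroup (coxRels k) :=
  PresentedGroup.of ((t : ℤ) : ZMod (k + 1))

/-- the transposition `t_{r,s} = σ_r σ_{r+1} ⋯ σ_{s-2} σ_{s-1} σ_{s-2} ⋯ σ_{r+1} σ_r` -/
def trsElt (k : ℕ) (r s : ℤ) : PresentedGroup (coxRels k) :=
  ((trsList r s).map (sigmaGen k)).prod

/-! The `k`-Schur functions at `t = 1`, via the triangular system defining them in
terms of the complete homogeneous symmetric functions.  We model the ring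
`Λ = ℤ[h₁, h₂, …]` as the polynomial ring `MvPolynomial ℕ ℤ`, `X m` standing for
`h_m`. -/

def hMono (lam : ℕ → ℕ) : MvPolynomial ℕ ℤ :=
  ∏ᶠ i : ℕ, if lam i = 0 then 1 else MvPolynomial.X (lam i)

def numParts (f : ℕ → ℕ) : ℕ := Nat.card {i : ℕ | f i ≠ 0}

/-- `T` is a `k`-tableau of shape the `(k+1)`-core `g` and `k`-weight `α` -/
def IsKTableau (k : ℕ) (g α : ℕ → ℕ) (T : ℕ × ℕ → ℕ) : Prop :=
  (∀ p : ℕ × ℕ, ¬p.2 < g p.1 → T p = 0) ∧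
    (∀ a b, b < g a → 1 ≤ T (a, b) ∧ T (a, b) ≤ numParts α) ∧
    (∀ a b b', b ≤ b' → b' < g a → T (a, b) ≤ T (a, b')) ∧
    (∀ a a' b, a < a' → b < g a' → T (a, b) < T (a', b)) ∧
    ∀ m, 1 ≤ m → m ≤ numParts α →
      Nat.card {ρ : ZMod (k + 1) | ∃ a b, b < g a ∧ T (a, b) = m ∧ resid k a b = ρ} = α (m - 1)

/-- the `k`-Kostka number `K^{(k)}_{μ lam}` -/
def Kcoef (k : ℕ) (μ lam : ℕ → ℕ) : ℕ :=
  Nat.card {x : (ℕ → ℕ) × (ℕ × ℕ → ℕ) //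
    IsPartitionFun x.1 ∧ IsCore (k + 1) x.1 ∧ pmapFun k x.1 = μ ∧ IsKTableau k x.1 lam x.2}

/-- `s` is the family of `k`-Schur functions (at `t = 1`):
`h_lam = Σ_μ K^{(k)}_{μ lam} s_μ` for all `k`-bounded partitions `lam` -/
def IsKSchurFamily (k : ℕ) (s : (ℕ → ℕ) → MvPolynomial ℕ ℤ) : Prop :=
  ∀ lam : ℕ → ℕ, IsPartitionFun lam → IsKBounded k lam →
    hMono lam =
      ∑ᶠ μ ∈ {μ : ℕ → ℕ | IsPartitionFun μ ∧ IsKBounded k μ ∧ sizeP μ = sizeP lam},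
        (Kcoef k μ lam : ℤ) • s μ

/-- the sequences `S = (γ⁽⁰⁾, …, γ⁽ʳ⁾)` of Corollary: encoded as `(r, G, L)` where
`γ⁽ⁱ⁾ = G i` and `ℓ_{i+1} = L i`. -/
def SeqSet (k : ℕ) (g : ℕ → ℕ) : Set (ℕ × (ℕ → ℕ → ℕ) × (ℕ → ℕ)) :=
  {x | x.2.1 0 = (fun _ => 0) ∧ x.2.1 x.1 = g ∧
    (∀ i, x.1 ≤ i → x.2.1 i = g ∧ x.2.2 i = 0) ∧
    ∀ i < x.1,
      IsPartitionFun (x.2.1 (i + 1)) ∧ IsCore (k + 1) (x.2.1 (i + 1)) ∧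
        (∀ a, x.2.1 i a ≤ x.2.1 (i + 1) a) ∧ x.2.1 i ≠ x.2.1 (i + 1) ∧ x.2.2 i ≤ k ∧
        RemVertStrip k (x.2.2 i) (x.2.1 (i + 1)) (hatCore k (x.2.1 (i + 1))) (x.2.1 i)}


/-- beta numbers -/
def bet (f : ℕ → ℕ) (i : ℕ) : ℤ := (f i : ℤ) - i

/-- enumeration of the complement of the beta set -/
def cfun (f : ℕ → ℕ) (j : ℕ) : ℤ := (j : ℤ) + 1 - colLen f j

/-- the beta set -/
def Bset (f : ℕ → ℕ) : Set ℤ := Set.range (bet f)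

lemma zero_tail {f : ℕ → ℕ} (hf : IsPartitionFun f) : ∃ N, ∀ i, N ≤ i → f i = 0 := by
  obtain ⟨N, hN⟩ := hf.2
  exact ⟨N, fun i hi => Nat.le_zero.1 (hN ▸ hf.1 hi)⟩

lemma colLen_iff {f : ℕ → ℕ} (hf : IsPartitionFun f) (i j : ℕ) :
    j < f i ↔ i < colLen f j := by
  obtain ⟨N, hN⟩ := hf.2
  have hex : ∃ n, ¬ j < f n := ⟨N, by omega⟩
  set n0 := Nat.find hex with hn0
  have hspec : ¬ j < f n0 := Nat.find_spec hex
  have hiff : ∀ x, j < f x ↔ x < n0 := by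
    intro x
    constructor
    · intro hx
      by_contra h
      push_neg at h
      exact hspec (lt_of_lt_of_le hx (hf.1 h))
    · intro hx
      have := Nat.find_min hex hx
      omega
  have hS : {i : ℕ | j < f i} = Set.Iio n0 := by
    ext x; simpa using hiff x
  have hc : colLen f j = n0 := by
    rw [colLen, hS]; simp [Nat.card_eq_card_toFinset]
  rw [hc]; exact hiff i

lemma bet_lt {f : ℕ → ℕ} (hf : IsPartitionFun f) {i j : ℕ} (h : i < j) :
    bet f j < bet f i := by
  have := hf.1 h.le
  unfold bet; omega

lemma bet_strictAnti {f : ℕ → ℕ} (hf : IsPartitionFun f) : StrictAnti (bet f) :=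
  fun _ _ h => bet_lt hf h

lemma cfun_lt_bet_iff {f : ℕ → ℕ} (hf : IsPartitionFun f) (i j : ℕ) :
    cfun f j < bet f i ↔ j < f i := by
  have h1 := colLen_iff hf i j
  unfold cfun bet
  omega

lemma bet_lt_cfun {f : ℕ → ℕ} (hf : IsPartitionFun f) {i j : ℕ} (h : f i ≤ j) :
    bet f i < cfun f j := by
  have h1 := colLen_iff hf i j
  unfold cfun bet
  omega

lemma cfun_not_mem {f : ℕ → ℕ} (hf : IsPartitionFun f) (j : ℕ) : cfun f j ∉ Bset f := by
  rintro ⟨i, hi⟩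
  rcases lt_or_ge j (f i) with h | h
  · have := (cfun_lt_bet_iff hf i j).2 h
    omega
  · have := bet_lt_cfun hf h
    omega

lemma colLen_anti {f : ℕ → ℕ} (hf : IsPartitionFun f) (j : ℕ) :
    colLen f (j + 1) ≤ colLen f j := by
  by_contra h
  push_neg at h
  have h1 : (colLen f j) < colLen f (j+1) := h
  have h2 : j + 1 < f (colLen f j) := (colLen_iff hf _ _).2 h1
  have h3 : j < f (colLen f j) := by omega
  have := (colLen_iff hf (colLen f j) j).1 h3
  omega

lemma cfun_strictMono {f : ℕ → ℕ} (hf : IsPartitionFun f) : StrictMono (cfun f) := by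
  apply strictMono_nat_of_lt_succ
  intro j
  have := colLen_anti hf j
  unfold cfun
  push_cast
  omega

lemma exists_cfun_of_not_mem {f : ℕ → ℕ} (hf : IsPartitionFun f) {m : ℤ}
    (hm : m ∉ Bset f) : ∃ j, cfun f j = m := by
  obtain ⟨N, hN⟩ := zero_tail hf
  have hex : ∃ i : ℕ, bet f i ≤ m := by
    refine ⟨N + (-m).toNat, ?_⟩
    have h0 : f (N + (-m).toNat) = 0 := hN _ (by omega)
    unfold bet
    rw [h0]
    omega
  set i := Nat.find hex with hidef
  have hle : bet f i ≤ m := Nat.find_spec hex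
  have hne : bet f i ≠ m := fun h => hm ⟨i, h⟩
  have hlt : bet f i < m := lt_of_le_of_ne hle hne
  have hmin : ∀ i' < i, m < bet f i' := by
    intro i' hi'
    have := Nat.find_min hex hi'
    omega
  have hnonneg : 0 ≤ m + i - 1 := by
    have : (0:ℤ) ≤ (f i : ℤ) := by positivity
    unfold bet at hlt
    omega
  set j := (m + i - 1).toNat with hjdef
  have hj : (j : ℤ) = m + i - 1 := Int.toNat_of_nonneg hnonneg
  have hcol : colLen f j = i := by
    have hub : ¬ (i < colLen f j) := by
      intro h
      have : j < f i := (colLen_iff hf i j).2 h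
      unfold bet at hlt
      omega
    rcases Nat.eq_zero_or_pos i with h0 | h0
    · omega
    · have hlb : j < f (i - 1) := by
        have h1 : m < bet f (i - 1) := hmin _ (by omega)
        unfold bet at h1
        omega
      have := (colLen_iff hf (i-1) j).1 hlb
      omega
  refine ⟨j, ?_⟩
  unfold cfun
  rw [hcol]
  omega

lemma hook_cast {f : ℕ → ℕ} (hf : IsPartitionFun f) {i j : ℕ} (h : j < f i) :
    (hookLen f i j : ℤ) = bet f i - cfun f j := by
  have h2 : i < colLen f j := (colLen_iff hf i j).1 h
  unfold hookLen bet cfun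
  omega

/-- the window of row `i` -/
def wnd (k : ℕ) (f : ℕ → ℕ) (i : ℕ) : Set ℤ := Set.Ioo (bet f i - (k+1)) (bet f i)

lemma wnd_finite (k : ℕ) (f : ℕ → ℕ) (i : ℕ) : (wnd k f i).Finite := Set.finite_Ioo _ _

lemma wnd_ncard (k : ℕ) (f : ℕ → ℕ) (i : ℕ) : (wnd k f i).ncard = k := by
  have : (wnd k f i).ncard = Nat.card (Set.Ioo (bet f i - (k+1)) (bet f i)) := rfl
  rw [this]
  simp [Nat.card_eq_card_toFinset]

lemma rowCount_eq {k : ℕ} {f : ℕ → ℕ} (hf : IsPartitionFun f) (i : ℕ) :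
    rowCount k f i = (wnd k f i \ Bset f).ncard := by
  have himg : cfun f '' {j : ℕ | j < f i ∧ hookLen f i j ≤ k} = wnd k f i \ Bset f := by
    ext m
    simp only [Set.mem_image, Set.mem_setOf_eq, Set.mem_diff, wnd, Set.mem_Ioo]
    constructor
    · rintro ⟨j, ⟨hj1, hj2⟩, rfl⟩
      have hc : (hookLen f i j : ℤ) = bet f i - cfun f j := hook_cast hf hj1
      have hlt : cfun f j < bet f i := (cfun_lt_bet_iff hf i j).2 hj1
      refine ⟨⟨?_, hlt⟩, cfun_not_mem hf j⟩
      have : (hookLen f i j : ℤ) ≤ k := by exact_mod_cast hj2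
      omega
    · rintro ⟨⟨hm1, hm2⟩, hm3⟩
      obtain ⟨j, rfl⟩ := exists_cfun_of_not_mem hf hm3
      have hj1 : j < f i := (cfun_lt_bet_iff hf i j).1 hm2
      have hc : (hookLen f i j : ℤ) = bet f i - cfun f j := hook_cast hf hj1
      refine ⟨j, ⟨hj1, ?_⟩, rfl⟩
      omega
  have hinj : Set.InjOn (cfun f) {j : ℕ | j < f i ∧ hookLen f i j ≤ k} :=
    Set.injOn_of_injective (cfun_strictMono hf).injective
  calc rowCount k f i = ({j : ℕ | j < f i ∧ hookLen f i j ≤ k} : Set ℕ).ncard := rfl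
    _ = (cfun f '' {j : ℕ | j < f i ∧ hookLen f i j ≤ k}).ncard :=
        (Set.ncard_image_of_injOn hinj).symm
    _ = _ := by rw [himg]

lemma rowCount_add_eq {k : ℕ} {f : ℕ → ℕ} (hf : IsPartitionFun f) (i : ℕ) :
    (wnd k f i ∩ Bset f).ncard + rowCount k f i = k := by
  rw [rowCount_eq hf i]
  rw [Set.ncard_inter_add_ncard_diff_eq_ncard _ _ (wnd_finite k f i)]
  exact wnd_ncard k f i

lemma rowCount_le {k : ℕ} {f : ℕ → ℕ} (hf : IsPartitionFun f) (i : ℕ) :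
    rowCount k f i ≤ k := by
  have := rowCount_add_eq (k := k) hf i
  omega

lemma core_iff {k : ℕ} {f : ℕ → ℕ} (hf : IsPartitionFun f) :
    IsCore (k+1) f ↔ ∀ m ∈ Bset f, m - (k+1) ∈ Bset f := by
  constructor
  · rintro hcore m ⟨i, rfl⟩
    by_contra hno
    obtain ⟨j, hj⟩ := exists_cfun_of_not_mem hf hno
    have hlt : cfun f j < bet f i := by omega
    have hji : j < f i := (cfun_lt_bet_iff hf i j).1 hlt
    have hc : (hookLen f i j : ℤ) = bet f i - cfun f j := hook_cast hf hji
    exact hcore i j hji (by omega)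
  · intro hcl i j hji hhook
    have hc : (hookLen f i j : ℤ) = bet f i - cfun f j := hook_cast hf hji
    have : cfun f j = bet f i - (k+1) := by omega
    exact cfun_not_mem hf j (this ▸ hcl _ ⟨i, rfl⟩)

lemma core_closure_iter {k : ℕ} {f : ℕ → ℕ} (hf : IsPartitionFun f)
    (hcore : IsCore (k+1) f) {m : ℤ} (hm : m ∈ Bset f) (t : ℕ) :
    m - (k+1) * t ∈ Bset f := by
  induction t with
  | zero => simpa using hm
  | succ t ih =>
    have := (core_iff hf).1 hcore _ ih
    have he : m - (k+1) * (t+1 : ℕ) = m - (k+1) * t - (k+1) := by push_cast; ring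
    rw [he]
    exact this

lemma mem_Bset_of_lt {f : ℕ → ℕ} (hf : IsPartitionFun f) {i : ℕ} {m : ℤ}
    (hm : m ∈ Bset f) (h : m < bet f i) : ∃ j, i < j ∧ bet f j = m := by
  obtain ⟨j, rfl⟩ := hm
  rcases lt_or_ge i j with hij | hij
  · exact ⟨j, hij, rfl⟩
  · rcases eq_or_lt_of_le hij with rfl | hlt
    · omega
    · have := bet_lt hf hlt
      omega

lemma rowCount_succ_le {k : ℕ} {f : ℕ → ℕ} (hf : IsPartitionFun f)
    (hcore : IsCore (k+1) f) (i : ℕ) :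
    rowCount k f (i+1) ≤ rowCount k f i := by
  rw [rowCount_eq hf, rowCount_eq hf]
  set b := bet f i with hb
  set b' := bet f (i+1) with hb'
  have hbb : b' < b := bet_lt hf (Nat.lt_succ_self i)
  set φ : ℤ → ℤ := fun m => b - 1 - ((b - 1 - m) % (k+1)) with hφ
  have hkpos : (0:ℤ) < (k:ℤ)+1 := by positivity
  have hprop : ∀ m, m ∉ Bset f → b' - (k+1) < m → m < b' →
      (φ m ∉ Bset f ∧ b - (k+1) < φ m ∧ φ m < b ∧ ∃ q : ℤ, 0 ≤ q ∧ φ m = m + (k+1) * q) := by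
    intro m hm3 hm1 hm2
    have hmod : 0 ≤ (b - 1 - m) % (k+1) := Int.emod_nonneg _ (by omega)
    have hmodlt : (b - 1 - m) % (k+1) < k+1 := Int.emod_lt_of_pos _ hkpos
    have hdm := Int.mul_ediv_add_emod (b - 1 - m) (k+1)
    set q := (b-1-m)/((k:ℤ)+1) with hq
    have hq0 : 0 ≤ q := Int.ediv_nonneg (by omega) (by omega)
    have hφm : φ m = m + (k+1) * q := by simp only [hφ]; omega
    have hne : (b - 1 - m) % (k+1) ≠ k := by
      intro heq
      have hqq : ((k:ℤ)+1) * (q + 1) = (k+1) * q + (k+1) := by ring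
      have hmm : m = b - (k+1) * (q + 1) := by omega
      have : b - (k+1) * ((q+1).toNat) ∈ Bset f :=
        core_closure_iter hf hcore ⟨i, rfl⟩ (q+1).toNat
      rw [Int.toNat_of_nonneg (by omega)] at this
      exact hm3 (by rw [hmm]; exact this)
    refine ⟨?_, by omega, by omega, q, hq0, hφm⟩
    intro hmem
    have h2 : φ m - (k+1) * (q.toNat) ∈ Bset f := core_closure_iter hf hcore hmem q.toNat
    rw [Int.toNat_of_nonneg hq0, hφm] at h2
    have : m + (k+1) * q - (k+1) * q = m := by ring
    rw [this] at h2
    exact hm3 h2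
  refine Set.ncard_le_ncard_of_injOn φ ?_ ?_ (Set.Finite.diff (wnd_finite k f i))
  · rintro m ⟨⟨hm1, hm2⟩, hm3⟩
    obtain ⟨hn, hw1, hw2, _⟩ := hprop m hm3 hm1 hm2
    exact ⟨⟨hw1, hw2⟩, hn⟩
  · rintro m ⟨⟨hm1, hm2⟩, hm3⟩ m' ⟨⟨hm1', hm2'⟩, hm3'⟩ heq
    obtain ⟨_, _, _, q, hq0, hφm⟩ := hprop m hm3 hm1 hm2
    obtain ⟨_, _, _, q', hq0', hφm'⟩ := hprop m' hm3' hm1' hm2'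
    rw [hφm, hφm'] at heq
    have hc : m - m' = (k+1) * (q' - q) := by linarith
    have hb1 : -((k:ℤ)+1) < m - m' := by omega
    have hb2 : m - m' < (k:ℤ)+1 := by omega
    set c := q' - q with hcdef
    have : c = 0 := by
      rcases lt_trichotomy c 0 with h | h | h
      · have : (k+1) * c ≤ -((k:ℤ)+1) := by nlinarith
        omega
      · exact h
      · have : ((k:ℤ)+1) ≤ (k+1) * c := by nlinarith
        omega
    rw [this, mul_zero] at hc
    omega

lemma rowCount_anti {k : ℕ} {f : ℕ → ℕ} (hf : IsPartitionFun f)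
    (hcore : IsCore (k+1) f) : ∀ ⦃i j : ℕ⦄, i ≤ j → rowCount k f j ≤ rowCount k f i := by
  intro i j hij
  induction j, hij using Nat.le_induction with
  | base => exact le_rfl
  | succ n hn ih => exact le_trans (rowCount_succ_le hf hcore n) ih

lemma rowCount_zero {k : ℕ} {f : ℕ → ℕ} {i : ℕ} (h : f i = 0) : rowCount k f i = 0 := by
  have : {j : ℕ | j < f i ∧ hookLen f i j ≤ k} = ∅ := by
    ext j; simp [h]
  rw [rowCount, this]
  simp

lemma pmap_mem {k : ℕ} {f : ℕ → ℕ} (hf : IsPartitionFun f) (hcore : IsCore (k+1) f) :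
    IsPartitionFun (pmapFun k f) ∧ IsKBounded k (pmapFun k f) := by
  obtain ⟨N, hN⟩ := hf.2
  refine ⟨⟨fun i j hij => rowCount_anti hf hcore hij, N, rowCount_zero hN⟩,
    fun i => rowCount_le hf i⟩

lemma bet_inj_step {k : ℕ} {f f' : ℕ → ℕ} (hf : IsPartitionFun f) (hf' : IsPartitionFun f')
    (hc' : IsCore (k+1) f') (i : ℕ)
    (hrow : rowCount k f i = rowCount k f' i)
    (htail : ∀ j, i < j → bet f j = bet f' j)
    (hlt : bet f i < bet f' i) : False := by
  have ht' : bet f' i - (k+1) ∈ Bset f' := (core_iff hf').1 hc' _ ⟨i, rfl⟩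
  obtain ⟨j, hij, hbj⟩ := mem_Bset_of_lt (i := i) hf' ht' (by omega)
  have hcard : (wnd k f' i ∩ Bset f').ncard = (wnd k f i ∩ Bset f).ncard := by
    have h1 := rowCount_add_eq (k := k) hf i
    have h2 := rowCount_add_eq (k := k) hf' i
    omega
  have hsub : wnd k f' i ∩ Bset f' ⊆ wnd k f i ∩ Bset f := by
    rintro m ⟨⟨hm1, hm2⟩, hm3⟩
    obtain ⟨j', hij', hbj'⟩ := mem_Bset_of_lt (i := i) hf' hm3 hm2
    have hbf : bet f j' = m := by rw [htail j' hij']; exact hbj'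
    have hmlt : m < bet f i := by rw [← hbf]; exact bet_lt hf hij'
    exact ⟨⟨by omega, hmlt⟩, ⟨j', hbf⟩⟩
  have heqset : wnd k f' i ∩ Bset f' = wnd k f i ∩ Bset f :=
    Set.eq_of_subset_of_ncard_le hsub (le_of_eq hcard.symm)
      (Set.Finite.inter_of_left (wnd_finite k f i) _)
  have hbfj : bet f j = bet f' i - (k+1) := by rw [htail j hij]; exact hbj
  have hjlt : bet f j < bet f i := bet_lt hf hij
  have htf : bet f' i - (k+1) ∈ wnd k f i ∩ Bset f :=
    ⟨⟨by omega, by omega⟩, ⟨j, hbfj⟩⟩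
  rw [← heqset] at htf
  have := htf.1.1
  omega

lemma bet_eq_of_pmap_eq {k : ℕ} {f f' : ℕ → ℕ} (hf : IsPartitionFun f)
    (hf' : IsPartitionFun f') (hc : IsCore (k+1) f) (hc' : IsCore (k+1) f')
    (hp : pmapFun k f = pmapFun k f') : ∀ i, bet f i = bet f' i := by
  obtain ⟨N1, h1⟩ := zero_tail hf
  obtain ⟨N2, h2⟩ := zero_tail hf'
  set N := max N1 N2 with hN
  have hbase : ∀ i, N ≤ i → bet f i = bet f' i := by
    intro i hi
    unfold bet
    rw [h1 i (by omega), h2 i (by omega)]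
  have main : ∀ d, ∀ i, N ≤ i + d → bet f i = bet f' i := by
    intro d
    induction d using Nat.strong_induction_on with
    | _ d ih =>
      intro i hi
      rcases le_or_gt N i with h | h
      · exact hbase i h
      · have htail : ∀ j, i < j → bet f j = bet f' j := by
          intro j hj
          exact ih (d-1) (by omega) j (by omega)
        have hrow : rowCount k f i = rowCount k f' i := congrFun hp i
        rcases lt_trichotomy (bet f i) (bet f' i) with hlt | heq | hgt
        · exact absurd (bet_inj_step hf hf' hc' i hrow htail hlt) id
        · exact heq
        · exact absurd (bet_inj_step hf' hf hc i hrow.symm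
            (fun j hj => (htail j hj).symm) hgt) id
  intro i
  exact main N i (by omega)

lemma pmap_inj {k : ℕ} {f f' : ℕ → ℕ} (hf : IsPartitionFun f)
    (hf' : IsPartitionFun f') (hc : IsCore (k+1) f) (hc' : IsCore (k+1) f')
    (hp : pmapFun k f = pmapFun k f') : f = f' := by
  funext i
  have := bet_eq_of_pmap_eq hf hf' hc hc' hp i
  unfold bet at this
  omega

def betAux (k : ℕ) (lam : ℕ → ℕ) : ℕ → ℕ → ℤ
  | 0, i => -(i : ℤ)
  | (fuel+1), i =>
      if lam i = 0 then -(i:ℤ) else betAux k lam fuel (i + 1 + (k - lam i)) + (k+1)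

lemma chain_lt {g : ℕ → ℤ} {s : ℕ} (h : ∀ j, s ≤ j → g (j+1) < g j) :
    ∀ a b, s ≤ a → a < b → g b < g a := by
  intro a b ha hab
  induction b with
  | zero => omega
  | succ b ihb =>
    rcases Nat.lt_or_ge a b with h' | h'
    · exact lt_trans (h b (by omega)) (ihb h')
    · have hab' : a = b := by omega
      subst hab'
      exact h a ha

section Surj

variable {k N : ℕ} {lam : ℕ → ℕ}

lemma betAux_stab (hN : ∀ i, N ≤ i → lam i = 0) :
    ∀ fuel i, N ≤ i + fuel → betAux k lam (fuel+1) i = betAux k lam fuel i := by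
  intro fuel
  induction fuel with
  | zero =>
    intro i hi
    simp [betAux, hN i (by omega)]
  | succ fuel ih =>
    intro i hi
    have e1 : betAux k lam (fuel+1+1) i =
        if lam i = 0 then -(i:ℤ) else betAux k lam (fuel+1) (i + 1 + (k - lam i)) + (k+1) := rfl
    have e2 : betAux k lam (fuel+1) i =
        if lam i = 0 then -(i:ℤ) else betAux k lam fuel (i + 1 + (k - lam i)) + (k+1) := rfl
    by_cases h : lam i = 0
    · rw [e1, e2, if_pos h, if_pos h]
    · rw [e1, e2, if_neg h, if_neg h, ih (i + 1 + (k - lam i)) (by omega)]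

lemma bb_unfold (hN : ∀ i, N ≤ i → lam i = 0) (i : ℕ) :
    betAux k lam N i =
      if lam i = 0 then -(i:ℤ) else betAux k lam N (i + 1 + (k - lam i)) + (k+1) := by
  cases N with
  | zero =>
    have h0 : lam i = 0 := hN i (by omega)
    simp [betAux, h0]
  | succ M =>
    have e1 : betAux k lam (M+1) i =
        if lam i = 0 then -(i:ℤ) else betAux k lam M (i + 1 + (k - lam i)) + (k+1) := rfl
    rw [e1, betAux_stab hN M (i + 1 + (k - lam i)) (by omega)]

lemma lam_zero_ge (hlam : IsPartitionFun lam) {i j : ℕ} (h : lam i = 0) (hij : i ≤ j) :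
    lam j = 0 :=
  Nat.le_zero.1 (h ▸ hlam.1 hij)

lemma bb_flat (hN : ∀ i, N ≤ i → lam i = 0) {i : ℕ} (h : lam i = 0) :
    betAux k lam N i = -(i:ℤ) := by
  rw [bb_unfold hN i, if_pos h]

lemma bb_step (hN : ∀ i, N ≤ i → lam i = 0) (hlam : IsPartitionFun lam) (i : ℕ) :
    betAux k lam N (i + 1 + (k - lam i)) = betAux k lam N i - (k+1) := by
  by_cases h : lam i = 0
  · have h1 : lam (i + 1 + (k - lam i)) = 0 := lam_zero_ge hlam h (by omega)
    rw [bb_flat hN h1, bb_flat hN h]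
    omega
  · rw [bb_unfold hN i, if_neg h]
    ring

lemma bb_main (hN : ∀ i, N ≤ i → lam i = 0) (hlam : IsPartitionFun lam)
    (hbd : IsKBounded k lam) :
    ∀ d i, N ≤ i + d →
      betAux k lam N (i+1) < betAux k lam N i ∧
      -(i:ℤ) + lam i ≤ betAux k lam N i := by
  intro d
  induction d using Nat.strong_induction_on with
  | _ d ih =>
    intro i hi
    rcases le_or_gt N i with h | h
    · have h0 : lam i = 0 := hN i h
      have h1 : lam (i+1) = 0 := hN _ (by omega)
      rw [bb_flat hN h0, bb_flat hN h1]
      constructor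
      · omega
      · rw [h0]; push_cast; omega
    · have hstep : ∀ j, i+1 ≤ j → betAux k lam N (j+1) < betAux k lam N j := by
        intro j hj
        exact (ih (d-1) (by omega) j (by omega)).1
      have hlb : ∀ j, i+1 ≤ j → -(j:ℤ) + lam j ≤ betAux k lam N j := by
        intro j hj
        exact (ih (d-1) (by omega) j (by omega)).2
      have hanti := chain_lt hstep
      have hs1 := bb_step (k := k) hN hlam i
      have hs2 := bb_step (k := k) hN hlam (i+1)
      have hmono : lam (i+1) ≤ lam i := hlam.1 (Nat.le_succ i)
      have hki : lam i ≤ k := hbd i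
      constructor
      · have hcmp : betAux k lam N ((i+1) + 1 + (k - lam (i+1))) <
            betAux k lam N (i + 1 + (k - lam i)) :=
          hanti _ _ (by omega) (by omega)
        omega
      · have hl := hlb (i + 1 + (k - lam i)) (by omega)
        have hpos : (0:ℤ) ≤ (lam (i + 1 + (k - lam i)) : ℤ) := by positivity
        omega

end Surj

lemma pmap_surj {k : ℕ} {lam : ℕ → ℕ} (hlam : IsPartitionFun lam)
    (hbd : IsKBounded k lam) :
    ∃ f, IsPartitionFun f ∧ IsCore (k+1) f ∧ pmapFun k f = lam := by
  obtain ⟨N, hN⟩ := zero_tail hlam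
  set bb := betAux k lam N with hbbdef
  have hstrict : ∀ i, bb (i+1) < bb i := fun i => (bb_main hN hlam hbd N i (by omega)).1
  have hlb : ∀ i : ℕ, -(i:ℤ) + lam i ≤ bb i := fun i => (bb_main hN hlam hbd N i (by omega)).2
  have hanti : ∀ a b, a < b → bb b < bb a := fun a b hab =>
    chain_lt (s := 0) (fun j _ => hstrict j) a b (by omega) hab
  set f : ℕ → ℕ := fun i => (bb i + i).toNat with hfdef
  have hfi : ∀ i, (f i : ℤ) = bb i + i := by
    intro i
    have h1 := hlb i
    have h2 : (0:ℤ) ≤ (lam i : ℤ) := by positivity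
    simp only [hfdef]
    rw [Int.toNat_of_nonneg (by omega)]
  have hbet : bet f = bb := by
    funext i
    unfold bet
    rw [hfi i]
    ring
  have hf : IsPartitionFun f := by
    constructor
    · have hstepf : ∀ i, f (i+1) ≤ f i := by
        intro i
        have h1 := hstrict i
        have h2 := hfi i
        have h3 := hfi (i+1)
        omega
      intro i j hij
      induction j, hij using Nat.le_induction with
      | base => exact le_rfl
      | succ n hn ihn => exact le_trans (hstepf n) ihn
    · refine ⟨N, ?_⟩
      have h1 : bb N = -(N:ℤ) := bb_flat hN (hN N le_rfl)
      have h2 := hfi N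
      omega
  have hBset : Bset f = Set.range bb := by
    unfold Bset
    rw [hbet]
  have hstep2 : ∀ j, bb (j + 1 + (k - lam j)) = bb j - (k+1) := by
    intro j
    rw [hbbdef]
    exact bb_step hN hlam j
  have hcore : IsCore (k+1) f := by
    rw [core_iff hf]
    intro m hm
    rw [hBset] at hm ⊢
    obtain ⟨i, rfl⟩ := hm
    exact ⟨i + 1 + (k - lam i), hstep2 i⟩
  refine ⟨f, hf, hcore, ?_⟩
  funext i
  show rowCount k f i = lam i
  have hwnd : wnd k f i = Set.Ioo (bb i - (k+1)) (bb i) := by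
    unfold wnd
    rw [hbet]
  have himg : wnd k f i ∩ Bset f = bb '' (Set.Ioo i (i + 1 + (k - lam i))) := by
    rw [hwnd, hBset]
    ext m
    simp only [Set.mem_inter_iff, Set.mem_Ioo, Set.mem_range, Set.mem_image]
    constructor
    · rintro ⟨⟨hm1, hm2⟩, j, rfl⟩
      refine ⟨j, ⟨?_, ?_⟩, rfl⟩
      · by_contra hc
        push_neg at hc
        rcases eq_or_lt_of_le hc with rfl | hlt
        · omega
        · have := hanti j i hlt
          omega
      · by_contra hc
        push_neg at hc
        have hs := hstep2 i
        rcases eq_or_lt_of_le hc with heq | hlt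
        · rw [heq] at hs
          omega
        · have := hanti _ _ hlt
          omega
    · rintro ⟨j, ⟨hj1, hj2⟩, rfl⟩
      have h1 : bb j < bb i := hanti i j hj1
      have hs := hstep2 i
      have h2 : bb (i + 1 + (k - lam i)) < bb j := hanti j _ hj2
      exact ⟨⟨by omega, h1⟩, j, rfl⟩
  have hcount : (wnd k f i ∩ Bset f).ncard = k - lam i := by
    rw [himg]
    have hinj : Set.InjOn bb (Set.Ioo i (i + 1 + (k - lam i))) := by
      apply Set.injOn_of_injective
      intro a b hab
      by_contra hne
      rcases Nat.lt_or_ge a b with h' | h'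
      · have := hanti a b h'; omega
      · have h'' : b < a := by omega
        have := hanti b a h''; omega
    rw [Set.ncard_image_of_injOn hinj]
    have : (Set.Ioo i (i + 1 + (k - lam i))).ncard
        = Nat.card (Set.Ioo i (i + 1 + (k - lam i))) := rfl
    rw [this]
    simp [Nat.card_eq_card_toFinset]
    omega
  have hsum := rowCount_add_eq (k := k) hf i
  have hki := hbd i
  omega


/-- `𝔭` is a bijection from `(k+1)`-cores to `k`-bounded partitions. -/
theorem pmap_bijective (k : ℕ) (hk : 0 < k) :
    Set.BijOn (pmapFun k) {g : ℕ → ℕ | IsPartitionFun g ∧ IsCore (k + 1) g}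
      {lam : ℕ → ℕ | IsPartitionFun lam ∧ IsKBounded k lam} := by
  refine ⟨?_, ?_, ?_⟩
  · rintro g ⟨hg, hc⟩
    exact pmap_mem hg hc
  · rintro g ⟨hg, hc⟩ g' ⟨hg', hc'⟩ h
    exact pmap_inj hg hg' hc hc' h
  · rintro lam ⟨hlam, hbd⟩
    obtain ⟨f, hf, hc, hp⟩ := pmap_surj hlam hbd
    exact ⟨f, ⟨hf, hc⟩, hp⟩

end

end KSchur
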